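/- Let $\mu$ be a Borel measure positive and finite on all dyadic intervals, and suppose that the shift $T f = \sum_{I\in\mathcal{D}} \langle f, h_I\rangle h_{I_-}$ satisfies $\|T h_I\|_{\mathrm{BMO}} \lesssim \|h_I\|_{\mathrm{BMO}}$ uniformly over dyadic intervals $I$ (and similarly for the analogous shifts onto $I_+$ and onto the parent). Then $\mu$ is balanced: $m(I) \sim m(\widehat{I})$ uniformly, where $m(I)=\min\{\mu(I_-),\mu(I_+)\}$. The key computation is that $\|h_I\|_{\mathrm{BMO}(\mu)} \sim m(I)^{-1/2}$. -/

import Mathlib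

open MeasureTheory Set

noncomputable section

/-- The dyadic interval `[l·2^{-k}, (l+1)·2^{-k})`. -/
def dyadicI (k l : ℤ) : Set ℝ :=
  Set.Ico ((l : ℝ) * (2 : ℝ) ^ (-k)) (((l : ℝ) + 1) * (2 : ℝ) ^ (-k))

/-- A dyadic interval indexed by a pair `(generation, position)`. -/
def dI (p : ℤ × ℤ) : Set ℝ := dyadicI p.1 p.2

/-- Left child. -/
def leftCh (p : ℤ × ℤ) : ℤ × ℤ := (p.1 + 1, 2 * p.2)

/-- Right child. -/
def rightCh (p : ℤ × ℤ) : ℤ × ℤ := (p.1 + 1, 2 * p.2 + 1)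

/-- Dyadic parent. -/
def par (p : ℤ × ℤ) : ℤ × ℤ := (p.1 - 1, Int.fdiv p.2 2)

/-- `t`-th dyadic ancestor. -/
def anc (t : ℕ) (p : ℤ × ℤ) : ℤ × ℤ := par^[t] p

/-- The measure `μ` is positive and finite on all dyadic intervals. -/
def posFin (μ : Measure ℝ) : Prop := ∀ p : ℤ × ℤ, 0 < μ (dI p) ∧ μ (dI p) < ⊤

/-- The `μ`-average of `f` over a set `S`. -/
def avg (μ : Measure ℝ) (f : ℝ → ℝ) (S : Set ℝ) : ℝ :=
  (∫ x in S, f x ∂μ) / (μ S).toReal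

/-- The `μ`-adapted Haar function of the dyadic interval indexed by `p`. -/
def haar (μ : Measure ℝ) (p : ℤ × ℤ) : ℝ → ℝ := fun x =>
  Real.sqrt ((μ (dI (leftCh p))).toReal * (μ (dI (rightCh p))).toReal / (μ (dI p)).toReal) *
    ((dI (leftCh p)).indicator (fun _ => ((μ (dI (leftCh p))).toReal)⁻¹) x -
      (dI (rightCh p)).indicator (fun _ => ((μ (dI (rightCh p))).toReal)⁻¹) x)

/-- `m(I) = min(μ(I₋), μ(I₊))`. -/
def mval (μ : Measure ℝ) (p : ℤ × ℤ) : ℝ :=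
  min (μ (dI (leftCh p))).toReal (μ (dI (rightCh p))).toReal

/-- The dyadic martingale BMO oscillation of `f` over the dyadic interval `p`:
`(μ(J)⁻¹ ∫_J |f - ⟨f⟩_{Ĵ}|² dμ)^{1/2}`. -/
def osc (μ : Measure ℝ) (f : ℝ → ℝ) (p : ℤ × ℤ) : ℝ :=
  Real.sqrt (((μ (dI p)).toReal)⁻¹ * ∫ x in dI p, (f x - avg μ f (dI (par p))) ^ 2 ∂μ)

/-- The dyadic martingale `BMO(μ)` norm (as an extended real):
`sup_J (μ(J)⁻¹ ∫_J |f - ⟨f⟩_{Ĵ}|² dμ)^{1/2}`. -/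
def bmoNorm (μ : Measure ℝ) (f : ℝ → ℝ) : ENNReal :=
  ⨆ p : ℤ × ℤ, ENNReal.ofReal (osc μ f p)

lemma measdI (p : ℤ × ℤ) : MeasurableSet (dI p) := measurableSet_Ico

lemma par_leftCh (p : ℤ × ℤ) : par (leftCh p) = p := by
  unfold par leftCh
  have : Int.fdiv (2 * p.2) 2 = p.2 := by
    rw [Int.fdiv_eq_ediv_of_nonneg _ (by norm_num)]
    omega
  simp [this]

lemma par_rightCh (p : ℤ × ℤ) : par (rightCh p) = p := by
  unfold par rightCh
  have : Int.fdiv (2 * p.2 + 1) 2 = p.2 := by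
    rw [Int.fdiv_eq_ediv_of_nonneg _ (by norm_num)]
    omega
  simp [this]

lemma child_par (p : ℤ × ℤ) : p = leftCh (par p) ∨ p = rightCh (par p) := by
  unfold par leftCh rightCh
  rw [Int.fdiv_eq_ediv_of_nonneg _ (by norm_num)]
  rcases Int.even_or_odd p.2 with ⟨j, hj⟩ | ⟨j, hj⟩
  · left; ext <;> simp <;> omega
  · right; ext <;> simp <;> omega

lemma dIsplit (p : ℤ × ℤ) : dI (leftCh p) ∪ dI (rightCh p) = dI p := by
  obtain ⟨k, l⟩ := p
  unfold dI leftCh rightCh dyadicI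
  simp only
  have h2 : (2:ℝ) ^ (-k) = 2 * (2:ℝ) ^ (-(k+1)) := by
    rw [show -k = 1 + (-(k+1)) by ring, zpow_add₀ (two_ne_zero)]
    norm_num
  set t := (2:ℝ) ^ (-(k+1)) with ht
  have htpos : 0 < t := zpow_pos (by norm_num) _
  push_cast
  rw [h2]
  have e1 : (2*(l:ℝ)) * t = (l:ℝ) * (2*t) := by ring
  have e2 : (2*(l:ℝ)+1+1) * t = ((l:ℝ)+1) * (2*t) := by ring
  rw [e1, e2]
  apply Set.Ico_union_Ico_eq_Ico
  · nlinarith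
  · nlinarith

lemma dIdisj (p : ℤ × ℤ) : Disjoint (dI (leftCh p)) (dI (rightCh p)) := by
  obtain ⟨k, l⟩ := p
  unfold dI leftCh rightCh dyadicI
  simp only
  push_cast
  exact Set.Ico_disjoint_Ico_same

variable {μ : Measure ℝ}

lemma dRpos (hμ : posFin μ) (p : ℤ × ℤ) : 0 < (μ (dI p)).toReal :=
  ENNReal.toReal_pos (hμ p).1.ne' (hμ p).2.ne

lemma mval_pos (hμ : posFin μ) (p : ℤ × ℤ) : 0 < mval μ p :=
  lt_min (dRpos hμ _) (dRpos hμ _)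

lemma measure_split (hμ : posFin μ) (p : ℤ × ℤ) :
    (μ (dI p)).toReal = (μ (dI (leftCh p))).toReal + (μ (dI (rightCh p))).toReal := by
  rw [← dIsplit p, measure_union (dIdisj p) (measdI _),
    ENNReal.toReal_add (hμ (leftCh p)).2.ne (hμ (rightCh p)).2.ne]

/-- abbreviation for the Haar coefficient -/
def co (μ : Measure ℝ) (p : ℤ × ℤ) : ℝ :=
  Real.sqrt ((μ (dI (leftCh p))).toReal * (μ (dI (rightCh p))).toReal / (μ (dI p)).toReal)

lemma co_nonneg (μ : Measure ℝ) (p : ℤ × ℤ) : 0 ≤ co μ p := Real.sqrt_nonneg _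

lemma co_le (hμ : posFin μ) (p : ℤ × ℤ) : co μ p ≤ Real.sqrt (mval μ p) := by
  apply Real.sqrt_le_sqrt
  set a := (μ (dI (leftCh p))).toReal
  set b := (μ (dI (rightCh p))).toReal
  have ha : 0 < a := dRpos hμ _
  have hb : 0 < b := dRpos hμ _
  rw [measure_split hμ p]
  rw [div_le_iff₀ (by positivity)]
  unfold mval
  rcases le_total a b with h | h
  · rw [min_eq_left h]; nlinarith
  · rw [min_eq_right h]; nlinarith

lemma co_ge (hμ : posFin μ) (p : ℤ × ℤ) : Real.sqrt (mval μ p / 2) ≤ co μ p := by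
  apply Real.sqrt_le_sqrt
  set a := (μ (dI (leftCh p))).toReal
  set b := (μ (dI (rightCh p))).toReal
  have ha : 0 < a := dRpos hμ _
  have hb : 0 < b := dRpos hμ _
  rw [measure_split hμ p]
  rw [div_le_div_iff₀ (by norm_num) (by positivity)]
  unfold mval
  rcases le_total a b with h | h
  · rw [min_eq_left h]; nlinarith
  · rw [min_eq_right h]; nlinarith

lemma haar_abs_le (hμ : posFin μ) (p : ℤ × ℤ) (x : ℝ) :
    |haar μ p x| ≤ co μ p * (mval μ p)⁻¹ := by
  set a := (μ (dI (leftCh p))).toReal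
  set b := (μ (dI (rightCh p))).toReal
  have ha : 0 < a := dRpos hμ _
  have hb : 0 < b := dRpos hμ _
  have hm : 0 < mval μ p := mval_pos hμ p
  have h1 : a⁻¹ ≤ (mval μ p)⁻¹ := by
    apply inv_anti₀ hm (min_le_left _ _)
  have h2 : b⁻¹ ≤ (mval μ p)⁻¹ := by
    apply inv_anti₀ hm (min_le_right _ _)
  show |co μ p * _| ≤ _
  rw [abs_mul, abs_of_nonneg (co_nonneg μ p)]
  apply mul_le_mul_of_nonneg_left _ (co_nonneg μ p)
  rcases Classical.em (x ∈ dI (leftCh p)) with hL | hL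
  · have hR : x ∉ dI (rightCh p) := fun hR => (dIdisj p).ne_of_mem hL hR rfl
    rw [Set.indicator_of_mem hL, Set.indicator_of_notMem hR, sub_zero,
      abs_of_nonneg (inv_nonneg.2 ha.le)]
    exact h1
  · rw [Set.indicator_of_notMem hL]
    rcases Classical.em (x ∈ dI (rightCh p)) with hR | hR
    · rw [Set.indicator_of_mem hR, zero_sub, abs_neg, abs_of_nonneg (inv_nonneg.2 hb.le)]
      exact h2
    · rw [Set.indicator_of_notMem hR]
      simpa using inv_nonneg.2 hm.le
lemma sqrt_mul_inv (m : ℝ) (hm : 0 < m) : Real.sqrt m * m⁻¹ = (Real.sqrt m)⁻¹ := by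
  have hsm : Real.sqrt m * Real.sqrt m = m := Real.mul_self_sqrt hm.le
  have h0 : Real.sqrt m ≠ 0 := by positivity
  rw [← hsm]; field_simp; rw [Real.sqrt_sq (Real.sqrt_nonneg _)]

lemma avg_abs_le (hμ : posFin μ) (p q : ℤ × ℤ) :
    |avg μ (haar μ p) (dI q)| ≤ co μ p * (mval μ p)⁻¹ := by
  set C := co μ p * (mval μ p)⁻¹ with hC
  have hC0 : 0 ≤ C := mul_nonneg (co_nonneg μ p) (inv_nonneg.2 (mval_pos hμ p).le)
  have hbound : ‖∫ x in dI q, haar μ p x ∂μ‖ ≤ C * (μ (dI q)).toReal :=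
    norm_setIntegral_le_of_norm_le_const_ae (hμ q).2
      (ae_of_all _ fun x => by rw [Real.norm_eq_abs]; exact haar_abs_le hμ p x)
  have hq : 0 < (μ (dI q)).toReal := dRpos hμ q
  unfold avg
  rw [abs_div, abs_of_nonneg hq.le, div_le_iff₀ hq]
  exact hbound

lemma osc_le (hμ : posFin μ) (p q : ℤ × ℤ) :
    osc μ (haar μ p) q ≤ 2 * (Real.sqrt (mval μ p))⁻¹ := by
  set C := co μ p * (mval μ p)⁻¹ with hC
  have hm : 0 < mval μ p := mval_pos hμ p
  have hC0 : 0 ≤ C := mul_nonneg (co_nonneg μ p) (inv_nonneg.2 hm.le)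
  set v := avg μ (haar μ p) (dI (par q)) with hv
  have hvle : |v| ≤ C := avg_abs_le hμ p (par q)
  have hq : 0 < (μ (dI q)).toReal := dRpos hμ q
  have hpoint : ∀ x, (haar μ p x - v) ^ 2 ≤ (2 * C) ^ 2 := by
    intro x
    have h1 := haar_abs_le hμ p x
    have h2 := abs_le.1 h1
    have h3 := abs_le.1 hvle
    nlinarith [h2.1, h2.2, h3.1, h3.2]
  have hint : ∫ x in dI q, (haar μ p x - v) ^ 2 ∂μ ≤ (μ (dI q)).toReal * (2 * C) ^ 2 := by
    have := integral_mono_of_nonneg (μ := μ.restrict (dI q))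
      (f := fun x => (haar μ p x - v) ^ 2) (g := fun _ => (2 * C) ^ 2)
      (ae_of_all _ fun x => sq_nonneg _)
      (integrableOn_const (hμ q).2.ne)
      (ae_of_all _ hpoint)
    rwa [setIntegral_const, smul_eq_mul] at this
  unfold osc
  have h4 : ((μ (dI q)).toReal)⁻¹ * ∫ x in dI q, (haar μ p x - v) ^ 2 ∂μ ≤ (2 * C) ^ 2 := by
    rw [inv_mul_le_iff₀ hq]
    calc _ ≤ (μ (dI q)).toReal * (2*C)^2 := hint
    _ = (μ (dI q)).toReal * (2*C)^2 := rfl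
  calc Real.sqrt _ ≤ Real.sqrt ((2*C)^2) := Real.sqrt_le_sqrt h4
  _ = 2 * C := Real.sqrt_sq (by positivity)
  _ ≤ 2 * (Real.sqrt (mval μ p) * (mval μ p)⁻¹) := by
      have := co_le hμ p
      have h5 : C ≤ Real.sqrt (mval μ p) * (mval μ p)⁻¹ :=
        mul_le_mul_of_nonneg_right this (inv_nonneg.2 hm.le)
      linarith
  _ = 2 * (Real.sqrt (mval μ p))⁻¹ := by rw [sqrt_mul_inv _ hm]
lemma leftCh_subset (p : ℤ × ℤ) : dI (leftCh p) ⊆ dI p := by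
  rw [← dIsplit p]; exact subset_union_left

lemma rightCh_subset (p : ℤ × ℤ) : dI (rightCh p) ⊆ dI p := by
  rw [← dIsplit p]; exact subset_union_right

lemma integral_haar (hμ : posFin μ) (p : ℤ × ℤ) : ∫ x in dI p, haar μ p x ∂μ = 0 := by
  set a := (μ (dI (leftCh p))).toReal with haa
  set b := (μ (dI (rightCh p))).toReal with hbb
  have ha : 0 < a := dRpos hμ _
  have hb : 0 < b := dRpos hμ _
  haveI : IsFiniteMeasure (μ.restrict (dI p)) :=
    ⟨by rw [Measure.restrict_apply_univ]; exact (hμ p).2⟩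
  have hf1 : Integrable ((dI (leftCh p)).indicator (fun _ => a⁻¹)) (μ.restrict (dI p)) :=
    (integrable_const _).indicator (measdI _)
  have hf2 : Integrable ((dI (rightCh p)).indicator (fun _ => b⁻¹)) (μ.restrict (dI p)) :=
    (integrable_const _).indicator (measdI _)
  have e1 : ∫ x in dI p, (dI (leftCh p)).indicator (fun _ => a⁻¹) x ∂μ = 1 := by
    rw [setIntegral_indicator (measdI _),
      Set.inter_eq_self_of_subset_right (leftCh_subset p), setIntegral_const, smul_eq_mul,
      measureReal_def, ← haa, mul_inv_cancel₀ ha.ne']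
  have e2 : ∫ x in dI p, (dI (rightCh p)).indicator (fun _ => b⁻¹) x ∂μ = 1 := by
    rw [setIntegral_indicator (measdI _),
      Set.inter_eq_self_of_subset_right (rightCh_subset p), setIntegral_const, smul_eq_mul,
      measureReal_def, ← hbb, mul_inv_cancel₀ hb.ne']
  unfold haar
  rw [integral_const_mul, integral_sub hf1 hf2, e1, e2]
  simp

lemma avg_haar_zero (hμ : posFin μ) (p : ℤ × ℤ) : avg μ (haar μ p) (dI p) = 0 := by
  unfold avg
  rw [integral_haar hμ p, zero_div]

lemma osc_child_left (hμ : posFin μ) (p : ℤ × ℤ) :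
    osc μ (haar μ p) (leftCh p) = co μ p * ((μ (dI (leftCh p))).toReal)⁻¹ := by
  set a := (μ (dI (leftCh p))).toReal with haa
  have ha : 0 < a := dRpos hμ _
  unfold osc
  rw [par_leftCh, avg_haar_zero hμ p]
  have e : ∫ x in dI (leftCh p), (haar μ p x - 0) ^ 2 ∂μ
      = ∫ x in dI (leftCh p), (co μ p * a⁻¹) ^ 2 ∂μ := by
    apply setIntegral_congr_fun (measdI _)
    intro x hx
    have hR : x ∉ dI (rightCh p) := fun hR => (dIdisj p).ne_of_mem hx hR rfl
    show (haar μ p x - 0) ^ 2 = _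
    unfold haar
    rw [Set.indicator_of_mem hx, Set.indicator_of_notMem hR, sub_zero, sub_zero]
    simp [co, haa]
  rw [e, setIntegral_const, smul_eq_mul, measureReal_def, ← haa]
  have : a⁻¹ * (a * (co μ p * a⁻¹) ^ 2) = (co μ p * a⁻¹) ^ 2 := by
    field_simp
  rw [this, Real.sqrt_sq (mul_nonneg (co_nonneg μ p) (inv_nonneg.2 ha.le))]

lemma osc_child_right (hμ : posFin μ) (p : ℤ × ℤ) :
    osc μ (haar μ p) (rightCh p) = co μ p * ((μ (dI (rightCh p))).toReal)⁻¹ := by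
  set b := (μ (dI (rightCh p))).toReal with hbb
  have hb : 0 < b := dRpos hμ _
  unfold osc
  rw [par_rightCh, avg_haar_zero hμ p]
  have e : ∫ x in dI (rightCh p), (haar μ p x - 0) ^ 2 ∂μ
      = ∫ x in dI (rightCh p), (co μ p * b⁻¹) ^ 2 ∂μ := by
    apply setIntegral_congr_fun (measdI _)
    intro x hx
    have hL : x ∉ dI (leftCh p) := fun hL => (dIdisj p).ne_of_mem hL hx rfl
    show (haar μ p x - 0) ^ 2 = _
    unfold haar
    rw [Set.indicator_of_mem hx, Set.indicator_of_notMem hL, sub_zero, zero_sub, mul_neg,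
      neg_sq]
    simp [co, hbb]
  rw [e, setIntegral_const, smul_eq_mul, measureReal_def, ← hbb]
  have : b⁻¹ * (b * (co μ p * b⁻¹) ^ 2) = (co μ p * b⁻¹) ^ 2 := by
    field_simp
  rw [this, Real.sqrt_sq (mul_nonneg (co_nonneg μ p) (inv_nonneg.2 hb.le))]

lemma bmo_upper (hμ : posFin μ) (p : ℤ × ℤ) :
    bmoNorm μ (haar μ p) ≤ ENNReal.ofReal (2 * (Real.sqrt (mval μ p))⁻¹) :=
  iSup_le fun q => ENNReal.ofReal_le_ofReal (osc_le hμ p q)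

lemma bmo_lower (hμ : posFin μ) (p : ℤ × ℤ) :
    ENNReal.ofReal (2⁻¹ * (Real.sqrt (mval μ p))⁻¹) ≤ bmoNorm μ (haar μ p) := by
  have hm : 0 < mval μ p := mval_pos hμ p
  have hkey : 2⁻¹ * (Real.sqrt (mval μ p))⁻¹ ≤ co μ p * (mval μ p)⁻¹ := by
    have h1 : Real.sqrt (mval μ p) / 2 ≤ co μ p := by
      refine le_trans ?_ (co_ge hμ p)
      rw [show Real.sqrt (mval μ p) / 2 = Real.sqrt (mval μ p) * (Real.sqrt 4)⁻¹ by
        rw [show (4:ℝ) = 2^2 by norm_num, Real.sqrt_sq (by norm_num)]; ring,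
        ← Real.sqrt_inv, ← Real.sqrt_mul hm.le]
      apply Real.sqrt_le_sqrt
      rw [div_eq_mul_inv]
      have := hm.le
      gcongr <;> norm_num
    calc 2⁻¹ * (Real.sqrt (mval μ p))⁻¹ = (Real.sqrt (mval μ p) / 2) * (mval μ p)⁻¹ := by
          rw [← sqrt_mul_inv _ hm]; ring
    _ ≤ co μ p * (mval μ p)⁻¹ := by
          apply mul_le_mul_of_nonneg_right h1 (inv_nonneg.2 hm.le)
  rcases le_total (μ (dI (leftCh p))).toReal (μ (dI (rightCh p))).toReal with h | h
  · calc ENNReal.ofReal (2⁻¹ * (Real.sqrt (mval μ p))⁻¹)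
        ≤ ENNReal.ofReal (osc μ (haar μ p) (leftCh p)) := by
          apply ENNReal.ofReal_le_ofReal
          rw [osc_child_left hμ p]
          have hmin : mval μ p = (μ (dI (leftCh p))).toReal := min_eq_left h
          rw [hmin] at hkey ⊢
          exact hkey
    _ ≤ bmoNorm μ (haar μ p) := le_iSup (fun q => ENNReal.ofReal (osc μ (haar μ p) q)) _
  · calc ENNReal.ofReal (2⁻¹ * (Real.sqrt (mval μ p))⁻¹)
        ≤ ENNReal.ofReal (osc μ (haar μ p) (rightCh p)) := by
          apply ENNReal.ofReal_le_ofReal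
          rw [osc_child_right hμ p]
          have hmin : mval μ p = (μ (dI (rightCh p))).toReal := min_eq_right h
          rw [hmin] at hkey ⊢
          exact hkey
    _ ≤ bmoNorm μ (haar μ p) := le_iSup (fun q => ENNReal.ofReal (osc μ (haar μ p) q)) _
lemma balance_step {A x y : ℝ} (hA : 0 < A) (hx : 0 < x) (hy : 0 < y)
    (h : ENNReal.ofReal (2⁻¹ * (Real.sqrt y)⁻¹) ≤
      ENNReal.ofReal A * ENNReal.ofReal (2 * (Real.sqrt x)⁻¹)) :
    x ≤ 16 * A ^ 2 * y := by
  rw [← ENNReal.ofReal_mul hA.le] at h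
  set u := Real.sqrt x with hu'
  set v := Real.sqrt y with hv'
  have hu : 0 < u := Real.sqrt_pos.2 hx
  have hv : 0 < v := Real.sqrt_pos.2 hy
  have h' : 2⁻¹ * v⁻¹ ≤ A * (2 * u⁻¹) :=
    (ENNReal.ofReal_le_ofReal_iff (by positivity)).1 h
  have hmul := mul_le_mul_of_nonneg_left h' (by positivity : (0:ℝ) ≤ 2 * u * v)
  have l1 : (2 * u * v) * (2⁻¹ * v⁻¹) = u := by field_simp
  have l2 : (2 * u * v) * (A * (2 * u⁻¹)) = 4 * A * v := by field_simp; ring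
  rw [l1, l2] at hmul
  have k2 : u * u ≤ (4 * A * v) * (4 * A * v) := by
    nlinarith [mul_le_mul_of_nonneg_right hmul hu.le,
      mul_le_mul_of_nonneg_left hmul (by positivity : (0:ℝ) ≤ 4 * A * v)]
  have hx2 : u * u = x := Real.mul_self_sqrt hx.le
  have hy2 : v * v = y := Real.mul_self_sqrt hy.le
  nlinarith [k2]


/-- If all the elementary dyadic shifts `h_I ↦ h_{I₋}`, `h_I ↦ h_{I₊}`,
`h_I ↦ h_{Î}` are uniformly bounded on `BMO(μ)`, then `μ` is balanced:
`m(I) ∼ m(Î)` uniformly. The key computation is `‖h_I‖_{BMO(μ)} ∼ m(I)^{-1/2}`. -/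
theorem bmo_shift_bound_implies_balanced (μ : Measure ℝ) (hμ : posFin μ)
    (A : ℝ) (hA : 0 < A)
    (hshift : ∀ p : ℤ × ℤ,
      bmoNorm μ (haar μ (leftCh p)) ≤ ENNReal.ofReal A * bmoNorm μ (haar μ p) ∧
      bmoNorm μ (haar μ (rightCh p)) ≤ ENNReal.ofReal A * bmoNorm μ (haar μ p) ∧
      bmoNorm μ (haar μ (par p)) ≤ ENNReal.ofReal A * bmoNorm μ (haar μ p)) :
    (∃ B : ℝ, 0 < B ∧ ∀ p : ℤ × ℤ,
      mval μ p ≤ B * mval μ (par p) ∧ mval μ (par p) ≤ B * mval μ p) ∧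
    (∃ c : ℝ, 0 < c ∧ ∀ p : ℤ × ℤ,
      ENNReal.ofReal (c⁻¹ * (Real.sqrt (mval μ p))⁻¹) ≤ bmoNorm μ (haar μ p) ∧
      bmoNorm μ (haar μ p) ≤ ENNReal.ofReal (c * (Real.sqrt (mval μ p))⁻¹)) := by
  constructor
  · refine ⟨16 * A ^ 2, by positivity, fun p => ?_⟩
    constructor
    · apply balance_step hA (mval_pos hμ p) (mval_pos hμ (par p))
      calc ENNReal.ofReal (2⁻¹ * (Real.sqrt (mval μ (par p)))⁻¹)
          ≤ bmoNorm μ (haar μ (par p)) := bmo_lower hμ (par p)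
      _ ≤ ENNReal.ofReal A * bmoNorm μ (haar μ p) := (hshift p).2.2
      _ ≤ ENNReal.ofReal A * ENNReal.ofReal (2 * (Real.sqrt (mval μ p))⁻¹) :=
          mul_le_mul_right (bmo_upper hμ p) _
    · apply balance_step hA (mval_pos hμ (par p)) (mval_pos hμ p)
      have hchain : bmoNorm μ (haar μ p) ≤ ENNReal.ofReal A * bmoNorm μ (haar μ (par p)) := by
        rcases child_par p with hc | hc
        · have := (hshift (par p)).1; rwa [← hc] at this
        · have := (hshift (par p)).2.1; rwa [← hc] at this
      calc ENNReal.ofReal (2⁻¹ * (Real.sqrt (mval μ p))⁻¹)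
          ≤ bmoNorm μ (haar μ p) := bmo_lower hμ p
      _ ≤ ENNReal.ofReal A * bmoNorm μ (haar μ (par p)) := hchain
      _ ≤ ENNReal.ofReal A * ENNReal.ofReal (2 * (Real.sqrt (mval μ (par p)))⁻¹) :=
          mul_le_mul_right (bmo_upper hμ (par p)) _
  · exact ⟨2, by norm_num, fun p => ⟨by simpa using bmo_lower hμ p, bmo_upper hμ p⟩⟩
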